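/- arXiv:1601.03171 — 3 statements merged into one kernel-verified Lean document; each statement's English description precedes it below -/
import Mathlib

section
/- Let u_i(x) = (1/a_i)(1 − e^{−a_i x}) with a_i > 0 for i = 0,…,n, let λ_0 = 1 and λ_i > 0, and let X be a bounded random variable. If bounded random variables X̂_0,…,X̂_n satisfy X̂_0 + ⋯ + X̂_n = X and the first-order condition λ_i u_i'(w_i − X̂_i) = λ_j u_j'(w_j − X̂_j) almost surely for all i,j, then X̂_i = (a/a_i)(X − w) − (log λ_i)/a_i + w_i + (a/a_i)·Σ_{j=1}^n (log λ_j)/a_j for each i, where 1/a = Σ_{i=0}^n 1/a_i and w = Σ_{i=0}^n w_i. -/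
open MeasureTheory Filter Real Finset

theorem stmt3 {Ω : Type*} [MeasurableSpace Ω] (μ : Measure Ω) [IsProbabilityMeasure μ]
    (n : ℕ) (X : Ω → ℝ) (hXmeas : Measurable X) (MX : ℝ) (hMX : ∀ ω, |X ω| ≤ MX)
    (a : Fin (n + 1) → ℝ) (ha : ∀ i, 0 < a i)
    (w : Fin (n + 1) → ℝ)
    (lam : Fin (n + 1) → ℝ) (hlam0 : lam 0 = 1) (hlam : ∀ i, 0 < lam i)
    (Xh : Fin (n + 1) → Ω → ℝ) (hXhmeas : ∀ i, Measurable (Xh i))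
    (hXhbdd : ∀ i, ∃ M, ∀ ω, |Xh i ω| ≤ M)
    (hsum : ∀ ω, ∑ i, Xh i ω = X ω)
    (hFOC : ∀ i j, ∀ᵐ ω ∂μ,
      lam i * Real.exp (-(a i) * (w i - Xh i ω)) = lam j * Real.exp (-(a j) * (w j - Xh j ω))) :
    ∀ i, ∀ᵐ ω ∂μ,
      Xh i ω = ((∑ k, 1 / a k)⁻¹ / a i) * (X ω - ∑ k, w k)
        - Real.log (lam i) / a i + w i
        + ((∑ k, 1 / a k)⁻¹ / a i) * ∑ j ∈ Finset.univ.erase 0, Real.log (lam j) / a j := by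
  intro i
  have hA : ∀ᵐ ω ∂μ, ∀ j, lam j * Real.exp (-(a j) * (w j - Xh j ω))
      = Real.exp (-(a 0) * (w 0 - Xh 0 ω)) := by
    rw [ae_all_iff]
    intro j
    filter_upwards [hFOC j 0] with ω h
    rw [h, hlam0, one_mul]
  filter_upwards [hA] with ω hω
  obtain ⟨C, hCdef⟩ : ∃ C : ℝ, C = -(a 0) * (w 0 - Xh 0 ω) := ⟨_, rfl⟩
  have hω' : ∀ j, lam j * Real.exp (-(a j) * (w j - Xh j ω)) = Real.exp C := by
    rw [hCdef]; exact hω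
  have hXj : ∀ j, Xh j ω = w j - Real.log (lam j) / a j + C * (1 / a j) := by
    intro j
    have haj := (ha j).ne'
    have h1 := congrArg Real.log (hω' j)
    rw [Real.log_mul (hlam j).ne' (Real.exp_pos _).ne', Real.log_exp, Real.log_exp] at h1
    have h2 : Xh j ω = (C - Real.log (lam j) + a j * w j) / a j := by
      rw [eq_div_iff haj]
      linear_combination h1
    rw [h2]
    field_simp
    ring
  have hS : (∑ k, (1 : ℝ) / a k) ≠ 0 := by
    refine ne_of_gt (Finset.sum_pos (fun k _ => div_pos one_pos (ha k)) ⟨0, Finset.mem_univ 0⟩)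
  have hsum' : X ω = (∑ k, w k) - (∑ k, Real.log (lam k) / a k) + C * ∑ k, 1 / a k := by
    calc X ω = ∑ j, Xh j ω := (hsum ω).symm
      _ = ∑ j, (w j - Real.log (lam j) / a j + C * (1 / a j)) :=
          Finset.sum_congr rfl (fun j _ => hXj j)
      _ = (∑ k, w k) - (∑ k, Real.log (lam k) / a k) + C * ∑ k, 1 / a k := by
          rw [Finset.sum_add_distrib, Finset.sum_sub_distrib, ← Finset.mul_sum]
  have hC : C = (∑ k, 1 / a k)⁻¹ * (X ω - (∑ k, w k) + ∑ k, Real.log (lam k) / a k) := by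
    rw [eq_inv_mul_iff_mul_eq₀ hS]
    linear_combination -hsum'
  have hT : ∑ j ∈ Finset.univ.erase 0, Real.log (lam j) / a j
      = ∑ k, Real.log (lam k) / a k := by
    apply Finset.sum_erase
    rw [hlam0, Real.log_one, zero_div]
  rw [hXj i, hC, hT]
  ring
end

section
/- Let X be bounded and a_i > 0, w_i ∈ ℝ for i = 0,…,n, with 1/a = Σ 1/a_i. Define X̂_i = (a/a_i)·X + c_i where the constants c_i satisfy Σ c_i = 0 (so Σ X̂_i = X). Then for any other decomposition X = Σ X_i into bounded random variables, Σ_i (1/a_i) E[e^{−a_i(w_i − X̂_i)} ] ≤ Σ_i (1/a_i) E[e^{−a_i(w_i − X_i)}] provided e^{a_i X̂_i}·e^{−a_i w_i} is a.s. equal to the same random variable Λ for all i; i.e., proportional sharing of X with equalized marginal utilities minimizes the aggregate expected exponential disutility. -/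
open MeasureTheory Filter Real Finset

theorem stmt11 {Ω : Type*} [MeasurableSpace Ω] (μ : Measure Ω) [IsProbabilityMeasure μ]
    (n : ℕ) (X : Ω → ℝ) (hXmeas : Measurable X) (MX : ℝ) (hMX : ∀ ω, |X ω| ≤ MX)
    (a : Fin (n + 1) → ℝ) (ha : ∀ i, 0 < a i)
    (w : Fin (n + 1) → ℝ)
    (A : ℝ) (hA : A = (∑ i, 1 / a i)⁻¹)
    (c : Fin (n + 1) → ℝ) (hc : ∑ i, c i = 0)
    (Xh : Fin (n + 1) → Ω → ℝ)
    (hXh : ∀ i ω, Xh i ω = (A / a i) * X ω + c i)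
    (Λ : Ω → ℝ)
    (hΛ : ∀ i, ∀ᵐ ω ∂μ, Real.exp (a i * Xh i ω) * Real.exp (-(a i) * w i) = Λ ω) :
    ∀ Y : Fin (n + 1) → Ω → ℝ, (∀ i, Measurable (Y i)) →
      (∀ i, ∃ M, ∀ ω, |Y i ω| ≤ M) → (∀ ω, ∑ i, Y i ω = X ω) →
      ∑ i, (1 / a i) * ∫ ω, Real.exp (-(a i) * (w i - Xh i ω)) ∂μ ≤
        ∑ i, (1 / a i) * ∫ ω, Real.exp (-(a i) * (w i - Y i ω)) ∂μ := by
  intro Y hYm hYb hYsum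
  -- basic facts
  have hS : (0:ℝ) < ∑ i, 1 / a i :=
    Finset.sum_pos (fun i _ => one_div_pos.mpr (ha i)) ⟨0, Finset.mem_univ 0⟩
  have hA1 : A * ∑ i, 1 / a i = 1 := by
    rw [hA]; field_simp
  -- sum of Xh equals X
  have hXhsum : ∀ ω, ∑ i, Xh i ω = X ω := by
    intro ω
    have : ∑ i, Xh i ω = (∑ i, (A / a i)) * X ω + ∑ i, c i := by
      rw [Finset.sum_mul, ← Finset.sum_add_distrib]
      exact Finset.sum_congr rfl fun i _ => by rw [hXh]
    rw [this, hc, add_zero]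
    have : (∑ i, A / a i) = A * ∑ i, 1 / a i := by
      rw [Finset.mul_sum]; exact Finset.sum_congr rfl fun i _ => by ring
    rw [this, hA1, one_mul]
  -- measurability of Xh
  have hXhm : ∀ i, Measurable (Xh i) := by
    intro i
    have : Xh i = fun ω => (A / a i) * X ω + c i := funext fun ω => hXh i ω
    rw [this]
    exact (hXmeas.const_mul _).add_const _
  have hXhb : ∀ i, ∃ M, ∀ ω, |Xh i ω| ≤ M := by
    intro i
    refine ⟨|A / a i| * MX + |c i|, fun ω => ?_⟩
    rw [hXh]
    calc |A / a i * X ω + c i| ≤ |A / a i * X ω| + |c i| := abs_add_le _ _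
      _ = |A / a i| * |X ω| + |c i| := by rw [abs_mul]
      _ ≤ |A / a i| * MX + |c i| := by
          have := hMX ω
          nlinarith [abs_nonneg (A / a i)]
  -- integrability helper
  have key : ∀ (b : ℝ) (Z : Ω → ℝ), Measurable Z → (∃ M, ∀ ω, |Z ω| ≤ M) →
      Integrable (fun ω => Real.exp (b * Z ω)) μ := by
    rintro b Z hZ ⟨M, hM⟩
    refine ⟨((hZ.const_mul b).exp).aestronglyMeasurable, ?_⟩
    apply MeasureTheory.HasFiniteIntegral.of_bounded (C := Real.exp (|b| * M))
    filter_upwards with ω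
    rw [Real.norm_eq_abs, abs_of_pos (Real.exp_pos _)]
    apply Real.exp_le_exp.mpr
    calc b * Z ω ≤ |b * Z ω| := le_abs_self _
      _ = |b| * |Z ω| := abs_mul _ _
      _ ≤ |b| * M := mul_le_mul_of_nonneg_left (hM ω) (abs_nonneg b)
  have hintf : ∀ i, Integrable (fun ω => Real.exp (-(a i) * (w i - Xh i ω))) μ := by
    intro i
    have := key (-(a i)) (fun ω => w i - Xh i ω) (measurable_const.sub (hXhm i))
      (by obtain ⟨M, hM⟩ := hXhb i
          exact ⟨|w i| + M, fun ω => (abs_sub _ _).trans (by linarith [hM ω])⟩)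
    exact this
  have hintg : ∀ i, Integrable (fun ω => Real.exp (-(a i) * (w i - Y i ω))) μ := by
    intro i
    have := key (-(a i)) (fun ω => w i - Y i ω) (measurable_const.sub (hYm i))
      (by obtain ⟨M, hM⟩ := hYb i
          exact ⟨|w i| + M, fun ω => (abs_sub _ _).trans (by linarith [hM ω])⟩)
    exact this
  -- a.e. pointwise inequality of the sums
  have hΛ' : ∀ᵐ ω ∂μ, ∀ i, Real.exp (a i * Xh i ω) * Real.exp (-(a i) * w i) = Λ ω :=
    ae_all_iff.mpr hΛ
  have hptwise : ∀ᵐ ω ∂μ,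
      ∑ i, (1 / a i) * Real.exp (-(a i) * (w i - Xh i ω)) ≤
        ∑ i, (1 / a i) * Real.exp (-(a i) * (w i - Y i ω)) := by
    filter_upwards [hΛ'] with ω hω
    have hterm : ∀ i, (1 / a i) * Real.exp (-(a i) * (w i - Xh i ω))
        + Λ ω * (Y i ω - Xh i ω) ≤ (1 / a i) * Real.exp (-(a i) * (w i - Y i ω)) := by
      intro i
      have hf : Real.exp (-(a i) * (w i - Xh i ω)) = Λ ω := by
        rw [← hω i, ← Real.exp_add]; ring_nf
      have h1 : a i * (Y i ω - Xh i ω) + 1 ≤ Real.exp (a i * (Y i ω - Xh i ω)) :=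
        Real.add_one_le_exp _
      have h2 : Real.exp (-(a i) * (w i - Xh i ω)) * (a i * (Y i ω - Xh i ω) + 1)
          ≤ Real.exp (-(a i) * (w i - Y i ω)) := by
        calc Real.exp (-(a i) * (w i - Xh i ω)) * (a i * (Y i ω - Xh i ω) + 1)
            ≤ Real.exp (-(a i) * (w i - Xh i ω)) * Real.exp (a i * (Y i ω - Xh i ω)) :=
              mul_le_mul_of_nonneg_left h1 (Real.exp_pos _).le
          _ = Real.exp (-(a i) * (w i - Y i ω)) := by rw [← Real.exp_add]; ring_nf
      have hai := ha i
      calc (1 / a i) * Real.exp (-(a i) * (w i - Xh i ω)) + Λ ω * (Y i ω - Xh i ω)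
          = (1 / a i) * (Real.exp (-(a i) * (w i - Xh i ω)) * (a i * (Y i ω - Xh i ω) + 1)) := by
            rw [hf]; field_simp; ring
        _ ≤ (1 / a i) * Real.exp (-(a i) * (w i - Y i ω)) :=
            mul_le_mul_of_nonneg_left h2 (by positivity)
    have hsum := Finset.sum_le_sum (fun i (_ : i ∈ Finset.univ) => hterm i)
    rw [Finset.sum_add_distrib] at hsum
    have hzero : ∑ i, Λ ω * (Y i ω - Xh i ω) = 0 := by
      rw [← Finset.mul_sum, Finset.sum_sub_distrib, hYsum ω, hXhsum ω, sub_self, mul_zero]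
    linarith [hsum, hzero.symm ▸ hsum]
  -- conclude by integrating
  have hint1 : Integrable (fun ω => ∑ i, (1 / a i) * Real.exp (-(a i) * (w i - Xh i ω))) μ :=
    integrable_finset_sum _ (fun i _ => ((hintf i).const_mul _))
  have hint2 : Integrable (fun ω => ∑ i, (1 / a i) * Real.exp (-(a i) * (w i - Y i ω))) μ :=
    integrable_finset_sum _ (fun i _ => ((hintg i).const_mul _))
  have := integral_mono_ae hint1 hint2 hptwise
  rw [integral_finset_sum _ (fun i _ => ((hintf i).const_mul _)),
      integral_finset_sum _ (fun i _ => ((hintg i).const_mul _))] at this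
  simpa [integral_const_mul] using this
end

section
/- Let X be a bounded random variable with a = a(n) = 1/(1/a_0 + n/a_1) for fixed a_0, a_1 > 0. Then E[u_0(w_0 − X̂_0^{(n)})] → u_0(w_0 − E[X]) as n → ∞, where X̂_0^{(n)} = (a/a_0)X + (1/a − 1/a_0)·log E[e^{aX}] and u_0(x) = (1/a_0)(1 − e^{−a_0 x}). -/
open MeasureTheory Filter Real

theorem stmt13 {Ω : Type*} [MeasurableSpace Ω] (μ : Measure Ω) [IsProbabilityMeasure μ]
    (X : Ω → ℝ) (hXmeas : Measurable X) (M : ℝ) (hM : ∀ ω, |X ω| ≤ M)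
    (a₀ a₁ : ℝ) (ha₀ : 0 < a₀) (ha₁ : 0 < a₁) (w₀ : ℝ)
    (a : ℕ → ℝ) (ha : ∀ n, a n = (1 / a₀ + n / a₁)⁻¹)
    (u₀ : ℝ → ℝ) (hu₀ : ∀ x, u₀ x = (1 / a₀) * (1 - Real.exp (-(a₀) * x)))
    (Xh₀ : ℕ → Ω → ℝ)
    (hXh₀ : ∀ n ω, Xh₀ n ω = (a n / a₀) * X ω
      + (1 / a n - 1 / a₀) * Real.log (∫ ω', Real.exp (a n * X ω') ∂μ)) :
    Tendsto (fun n => ∫ ω, u₀ (w₀ - Xh₀ n ω) ∂μ) atTop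
      (nhds (u₀ (w₀ - ∫ ω, X ω ∂μ))) := by
  set EX := ∫ ω, X ω ∂μ with hEX
  set I : ℝ → ℝ := fun t => ∫ ω, Real.exp (t * X ω) ∂μ with hI
  -- integrability facts
  have hXint : Integrable X μ :=
    (integrable_const M).mono' hXmeas.aestronglyMeasurable
      (ae_of_all _ fun ω => by rw [Real.norm_eq_abs]; exact hM ω)
  have hintexp : ∀ t : ℝ, Integrable (fun ω => Real.exp (t * X ω)) μ := by
    intro t
    refine (integrable_const (Real.exp (|t| * M))).mono'
      ((hXmeas.const_mul t).exp.aestronglyMeasurable) (ae_of_all _ fun ω => ?_)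
    rw [Real.norm_eq_abs, abs_of_pos (Real.exp_pos _)]
    refine Real.exp_le_exp.2 (le_trans (le_abs_self _) ?_)
    rw [abs_mul]
    exact mul_le_mul_of_nonneg_left (hM ω) (abs_nonneg t)
  have hIpos : ∀ t : ℝ, 0 < I t := by
    intro t
    have hle : ∀ ω, Real.exp (-(|t| * M)) ≤ Real.exp (t * X ω) := by
      intro ω
      refine Real.exp_le_exp.2 ?_
      have : |t * X ω| ≤ |t| * M := by
        rw [abs_mul]; exact mul_le_mul_of_nonneg_left (hM ω) (abs_nonneg t)
      linarith [neg_abs_le (t * X ω)]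
    have := integral_mono (μ := μ) (integrable_const (Real.exp (-(|t| * M)))) (hintexp t) hle
    rw [integral_const] at this
    simp only [probReal_univ, one_smul] at this
    exact lt_of_lt_of_le (Real.exp_pos _) this
  -- lower bound on I
  have hlow : ∀ t : ℝ, 1 + t * EX ≤ I t := by
    intro t
    have h1 : ∀ ω, 1 + t * X ω ≤ Real.exp (t * X ω) := by
      intro ω; linarith [Real.add_one_le_exp (t * X ω)]
    have hint1 : Integrable (fun ω => 1 + t * X ω) μ :=
      (integrable_const 1).add (hXint.const_mul t)
    have h2 := integral_mono (μ := μ) hint1 (hintexp t) h1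
    rwa [integral_add (integrable_const 1) (hXint.const_mul t), integral_const,
      integral_const_mul, probReal_univ, one_smul] at h2
  -- upper bound on I for small t
  have hup : ∀ t : ℝ, 0 ≤ t → t * M ≤ 1 → I t ≤ 1 + t * EX + t ^ 2 * M ^ 2 := by
    intro t ht htM
    have h1 : ∀ ω, Real.exp (t * X ω) ≤ 1 + t * X ω + t ^ 2 * M ^ 2 := by
      intro ω
      have habs : |t * X ω| ≤ 1 := by
        rw [abs_mul, abs_of_nonneg ht]
        exact le_trans (mul_le_mul_of_nonneg_left (hM ω) ht) htM
      have hb := Real.abs_exp_sub_one_sub_id_le habs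
      have hx := hM ω
      have hx2 : (X ω) ^ 2 ≤ M ^ 2 := sq_le_sq' (by linarith [neg_abs_le (X ω)]) (le_trans (le_abs_self _) hx)
      have := abs_le.1 hb
      nlinarith [sq_nonneg t]
    have hintc : Integrable (fun _ : Ω => (1:ℝ)) μ := integrable_const 1
    have hinttX : Integrable (fun ω => t * X ω) μ := hXint.const_mul t
    have hint1' : Integrable (fun ω => 1 + t * X ω) μ := hintc.add hinttX
    have hint1 : Integrable (fun ω => 1 + t * X ω + t ^ 2 * M ^ 2) μ :=
      hint1'.add (integrable_const _)
    have h2 := integral_mono (μ := μ) (hintexp t) hint1 h1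
    rwa [integral_add hint1' (integrable_const _), integral_add hintc hinttX,
      integral_const, integral_const_mul, integral_const, probReal_univ,
      one_smul, one_smul] at h2
  -- a n is positive and tends to 0
  have hapos : ∀ n, 0 < a n := by
    intro n
    rw [ha n]
    refine inv_pos.2 (add_pos_of_pos_of_nonneg (by positivity) (by positivity))
  have ha0 : Tendsto a atTop (nhds 0) := by
    have h1 : Tendsto (fun n : ℕ => 1 / a₀ + (n : ℝ) / a₁) atTop atTop :=
      tendsto_atTop_add_const_left _ _ (tendsto_natCast_atTop_atTop.atTop_div_const ha₁)
    have := tendsto_inv_atTop_zero.comp h1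
    exact this.congr fun n => (ha n).symm
  set g : ℕ → ℝ := fun n => (a n)⁻¹ * Real.log (I (a n)) with hg_def
  -- key convergence
  have hg : Tendsto g atTop (nhds EX) := by
    have hlowseq : Tendsto (fun n => EX / (1 + a n * EX)) atTop (nhds EX) := by
      have : Tendsto (fun n => 1 + a n * EX) atTop (nhds (1 + 0 * EX)) :=
        tendsto_const_nhds.add (ha0.mul_const EX)
      rw [zero_mul, add_zero] at this
      simpa only [div_one, Pi.div_def] using (tendsto_const_nhds (x := EX)).div this (by norm_num)
    have hupseq : Tendsto (fun n => EX + a n * M ^ 2) atTop (nhds EX) := by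
      have : Tendsto (fun n => EX + a n * M ^ 2) atTop (nhds (EX + 0 * M ^ 2)) :=
        tendsto_const_nhds.add (ha0.mul_const _)
      simpa using this
    have hev1 : ∀ᶠ n in atTop, a n * M ≤ 1 := by
      have : Tendsto (fun n => a n * M) atTop (nhds 0) := by
        simpa using ha0.mul_const M
      exact this.eventually (eventually_le_nhds (by norm_num))
    have hev2 : ∀ᶠ n in atTop, a n * |EX| ≤ 1 / 2 := by
      have : Tendsto (fun n => a n * |EX|) atTop (nhds 0) := by
        simpa using ha0.mul_const |EX|
      exact this.eventually (eventually_le_nhds (by norm_num))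
    refine tendsto_of_tendsto_of_tendsto_of_le_of_le' hlowseq hupseq ?_ ?_
    · -- lower bound eventually
      filter_upwards [hev2] with n hn
      set t := a n with ht
      have htpos : 0 < t := hapos n
      have hpos1 : 0 < 1 + t * EX := by
        have : t * EX ≥ -(t * |EX|) := by
          rw [← mul_neg]
          exact mul_le_mul_of_nonneg_left (neg_abs_le EX) htpos.le
        linarith
      have hIp := hIpos t
      have hinv : (I t)⁻¹ ≤ (1 + t * EX)⁻¹ := inv_anti₀ hpos1 (hlow t)
      have hlog : 1 - (I t)⁻¹ ≤ Real.log (I t) := Real.one_sub_inv_le_log_of_pos hIp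
      have key : t * (EX / (1 + t * EX)) ≤ Real.log (I t) := by
        have heq : t * (EX / (1 + t * EX)) = 1 - (1 + t * EX)⁻¹ := by
          field_simp
          ring
        rw [heq]
        linarith
      show EX / (1 + t * EX) ≤ (t)⁻¹ * Real.log (I t)
      rw [inv_mul_eq_div, le_div_iff₀ htpos, mul_comm]
      exact key
    · -- upper bound eventually
      filter_upwards [hev1] with n hn
      set t := a n with ht
      have htpos : 0 < t := hapos n
      have hlog : Real.log (I t) ≤ t * EX + t ^ 2 * M ^ 2 := by
        have h1 := Real.log_le_sub_one_of_pos (hIpos t)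
        have h2 := hup t htpos.le hn
        linarith
      show (t)⁻¹ * Real.log (I t) ≤ EX + t * M ^ 2
      have : (t)⁻¹ * Real.log (I t) ≤ (t)⁻¹ * (t * EX + t ^ 2 * M ^ 2) :=
        mul_le_mul_of_nonneg_left hlog (inv_nonneg.2 htpos.le)
      calc (t)⁻¹ * Real.log (I t) ≤ (t)⁻¹ * (t * EX + t ^ 2 * M ^ 2) := this
        _ = EX + t * M ^ 2 := by field_simp
  -- exact computation of the expected utility
  have hcomp : ∀ n, ∫ ω, u₀ (w₀ - Xh₀ n ω) ∂μ
      = (1 / a₀) * (1 - Real.exp (a₀ * (g n - w₀))) := by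
    intro n
    have htpos : 0 < a n := hapos n
    have htne : a n ≠ 0 := htpos.ne'
    have ha₀ne : a₀ ≠ 0 := ha₀.ne'
    set L := Real.log (∫ ω', Real.exp (a n * X ω') ∂μ) with hL
    have hIL : (∫ ω', Real.exp (a n * X ω') ∂μ) = Real.exp L := (Real.exp_log (hIpos (a n))).symm
    have hptwise : ∀ ω, u₀ (w₀ - Xh₀ n ω)
        = (1 / a₀) * (1 - Real.exp ((a₀ / a n - 1) * L - a₀ * w₀) * Real.exp (a n * X ω)) := by
      intro ω
      rw [hu₀, hXh₀, ← Real.exp_add, ← hL]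
      have e0 : -(a₀) * (w₀ - (a n / a₀ * X ω + (1 / a n - 1 / a₀) * L))
          = (a₀ / a n - 1) * L - a₀ * w₀ + a n * X ω := by
        field_simp
        ring
      rw [e0]
    rw [show (fun ω => u₀ (w₀ - Xh₀ n ω))
        = fun ω => (1 / a₀) * (1 - Real.exp ((a₀ / a n - 1) * L - a₀ * w₀)
          * Real.exp (a n * X ω)) from funext hptwise]
    rw [integral_const_mul, integral_sub (integrable_const 1) ((hintexp (a n)).const_mul _),
      integral_const, integral_const_mul, probReal_univ, one_smul]
    have hgL : g n = (a n)⁻¹ * L := rfl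
    have h2 : Real.exp ((a₀ / a n - 1) * L - a₀ * w₀) * (∫ ω, Real.exp (a n * X ω) ∂μ)
        = Real.exp (a₀ * (g n - w₀)) := by
      rw [show (∫ ω, Real.exp (a n * X ω) ∂μ) = Real.exp L from hIL, ← Real.exp_add]
      congr 1
      rw [hgL]
      field_simp
      ring
    rw [h2]
  simp only [hcomp]
  have htarget : u₀ (w₀ - EX) = (1 / a₀) * (1 - Real.exp (a₀ * (EX - w₀))) := by
    rw [hu₀]; ring_nf
  rw [htarget]
  exact (tendsto_const_nhds.sub
    ((Real.continuous_exp.tendsto _).comp ((hg.sub tendsto_const_nhds).const_mul a₀))).const_mul _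
end
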